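/- arXiv:0712.0629 — 4 statements merged into one kernel-verified Lean document; each statement's English description precedes it below -/
import Mathlib

section
/- Let N, M, n be positive integers with N = nM, let a be an integer with 0 < a < M, and let τ be a point of the complex upper half-plane ℍ. Then ∏_{k=0}^{n−1} E_{kM+a}^{(N)}(τ) = E_a^{(M)}(τ). -/
open Complex

/-- The second Bernoulli function `B₂(x) = {x}² − {x} + 1/6`. -/
noncomputable def B₂ (x : ℝ) : ℝ := Int.fract x ^ 2 - Int.fract x + 1 / 6

/-- For `0 < a < N`, the Siegel-type function
`E_a^{(N)}(τ) = e^{πiτN·B₂(a/N)} ∏_{n=1}^∞ (1 − q^{(n−1)N+a})(1 − q^{nN−a})`, `q = e^{2πiτ}`.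
(This formula is used to define the function for every integer `a`; only its values for
`0 < a < N` matter.) -/
noncomputable def Eaux (N : ℕ) (a : ℤ) (τ : ℂ) : ℂ :=
  Complex.exp (Real.pi * I * τ * N * B₂ ((a : ℝ) / N)) *
    ∏' n : ℕ,
      (1 - Complex.exp (2 * Real.pi * I * τ * ((n : ℂ) * N + a))) *
        (1 - Complex.exp (2 * Real.pi * I * τ * (((n : ℂ) + 1) * N - a)))

/-- The function `E_a^{(N)}` extended to all integers `a` (not divisible by `N`) via
`E_a^{(N)} = (−1)^{⌊a/N⌋}·E_{a₀}^{(N)}` with `a₀` the representative of `a mod N` in `(0,N)`. -/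
noncomputable def E (N : ℕ) (a : ℤ) (τ : ℂ) : ℂ :=
  (-1 : ℂ) ^ (Int.ediv a N) * Eaux N (Int.emod a N) τ


section helpers
open Filter

private lemma norm_q_lt_one (τ : UpperHalfPlane) :
    ‖Complex.exp (2 * (Real.pi : ℂ) * I * (τ : ℂ))‖ < 1 := by
  rw [Complex.norm_exp]
  apply Real.exp_lt_one_iff.mpr
  have : (2 * (Real.pi : ℂ) * I * (τ : ℂ)).re = -(2 * Real.pi * (τ : ℂ).im) := by
    simp [Complex.mul_re, Complex.mul_im]
  rw [this]
  have h1 : 0 < 2 * Real.pi * (τ : ℂ).im := mul_pos (mul_pos two_pos Real.pi_pos) τ.2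
  linarith

private lemma one_sub_ne_zero {z : ℂ} (h : ‖z‖ < 1) : (1 : ℂ) - z ≠ 0 := by
  intro h0
  rw [sub_eq_zero] at h0
  rw [← h0] at h
  simp at h

private lemma summable_log_geom {u : ℝ} (h0 : 0 ≤ u) (h1 : u < 1) {f : ℕ → ℂ}
    (hb : ∀ j, ‖f j‖ ≤ u ^ (j + 1)) :
    Summable fun j => Complex.log (1 - f j) := by
  have hgeom : Summable fun j : ℕ => 3 / 2 * u ^ (j + 1) := by
    simpa [pow_succ, mul_comm, mul_assoc, mul_left_comm] using
      ((summable_geometric_of_lt_one h0 h1).mul_left (3 / 2 * u))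
  apply Summable.of_norm_bounded_eventually_nat hgeom
  have htend : Tendsto (fun j : ℕ => u ^ (j + 1)) atTop (nhds 0) :=
    (tendsto_pow_atTop_nhds_zero_of_lt_one h0 h1).comp (tendsto_add_atTop_nat 1)
  filter_upwards [htend.eventually_le_const (show (0:ℝ) < 1/2 by norm_num)] with j hj
  have hfj : ‖f j‖ ≤ 1 / 2 := le_trans (hb j) hj
  calc ‖Complex.log (1 - f j)‖ = ‖Complex.log (1 + -f j)‖ := by rw [sub_eq_add_neg]
    _ ≤ 3 / 2 * ‖-f j‖ := Complex.norm_log_one_add_half_le_self (by simpa using hfj)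
    _ ≤ 3 / 2 * u ^ (j + 1) := by rw [norm_neg]; nlinarith [hb j]

private lemma tprod_eq_exp_tsum_log {f : ℕ → ℂ} (hne : ∀ m, f m ≠ 0)
    (hs : Summable fun m => Complex.log (f m)) :
    ∏' m, f m = Complex.exp (∑' m, Complex.log (f m)) :=
  (Complex.cexp_tsum_eq_tprod hne hs).symm

private lemma multipliable_of_log {f : ℕ → ℂ} (hne : ∀ m, f m ≠ 0)
    (hs : Summable fun m => Complex.log (f m)) : Multipliable f :=
  Complex.multipliable_of_summable_log hs

/-- Facts about families `1 - q^(c m)` with `c m ≥ m+1`. -/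
private lemma family_facts (τ : UpperHalfPlane) (c : ℕ → ℕ) (hc : ∀ m, m + 1 ≤ c m) :
    (∀ m, (1 : ℂ) - Complex.exp (2 * (Real.pi : ℂ) * I * (τ : ℂ)) ^ c m ≠ 0) ∧
    Summable (fun m => Complex.log (1 - Complex.exp (2 * (Real.pi : ℂ) * I * (τ : ℂ)) ^ c m)) ∧
    Multipliable (fun m => (1 : ℂ) - Complex.exp (2 * (Real.pi : ℂ) * I * (τ : ℂ)) ^ c m) ∧
    ∏' m, ((1 : ℂ) - Complex.exp (2 * (Real.pi : ℂ) * I * (τ : ℂ)) ^ c m) =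
      Complex.exp (∑' m, Complex.log (1 - Complex.exp (2 * (Real.pi : ℂ) * I * (τ : ℂ)) ^ c m)) := by
  set q : ℂ := Complex.exp (2 * (Real.pi : ℂ) * I * (τ : ℂ)) with hq
  have hu1 : ‖q‖ < 1 := norm_q_lt_one τ
  have hu0 : (0 : ℝ) ≤ ‖q‖ := norm_nonneg _
  have hb : ∀ m, ‖q ^ c m‖ ≤ ‖q‖ ^ (m + 1) := by
    intro m
    rw [norm_pow]
    exact pow_le_pow_of_le_one hu0 hu1.le (hc m)
  have hne : ∀ m, (1 : ℂ) - q ^ c m ≠ 0 := by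
    intro m
    apply one_sub_ne_zero
    exact lt_of_le_of_lt (hb m) (pow_lt_one₀ hu0 hu1 (Nat.succ_ne_zero m))
  have hs : Summable fun m => Complex.log (1 - q ^ c m) := summable_log_geom hu0 hu1 hb
  exact ⟨hne, hs, multipliable_of_log hne hs, tprod_eq_exp_tsum_log hne hs⟩


private lemma tsum_residue_classes {F : ℕ → ℂ} (hF : Summable F) {n : ℕ} (hn : 0 < n) :
    ∑ k ∈ Finset.range n, ∑' m : ℕ, F (m * n + k) = ∑' j, F j := by
  haveI : NeZero n := ⟨hn.ne'⟩
  have happ : ∀ p : Fin n × ℕ,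
      ((Equiv.prodComm (Fin n) ℕ).trans (Nat.divModEquiv n).symm) p = p.2 * n + (p.1 : ℕ) := by
    intro p
    simp [Nat.divModEquiv]
  have hFe : Summable fun p : Fin n × ℕ => F (p.2 * n + p.1) := by
    have := hF.comp_injective
      ((Equiv.prodComm (Fin n) ℕ).trans (Nat.divModEquiv n).symm).injective
    apply this.congr
    intro p
    simp [Function.comp, happ p]
  calc ∑ k ∈ Finset.range n, ∑' m : ℕ, F (m * n + k)
      = ∑ r : Fin n, ∑' m : ℕ, F (m * n + r) := (Fin.sum_univ_eq_sum_range _ n).symm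
    _ = ∑' (r : Fin n), ∑' m : ℕ, F (m * n + r) := (tsum_fintype _).symm
    _ = ∑' p : Fin n × ℕ, F (p.2 * n + p.1) := (hFe.tsum_prod).symm
    _ = ∑' p : Fin n × ℕ,
          F (((Equiv.prodComm (Fin n) ℕ).trans (Nat.divModEquiv n).symm) p) := by
        apply tsum_congr
        intro p
        rw [happ p]
    _ = ∑' j, F j := Equiv.tsum_eq _ F

private lemma sum_sq_range (n : ℕ) :
    ∑ k ∈ Finset.range n, (k : ℝ) ^ 2 = n * (n - 1) * (2 * n - 1) / 6 := by
  induction n with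
  | zero => simp
  | succ m ih =>
    rw [Finset.sum_range_succ, ih]
    push_cast
    ring

private lemma sum_id_range (n : ℕ) :
    ∑ k ∈ Finset.range n, (k : ℝ) = n * (n - 1) / 2 := by
  induction n with
  | zero => simp
  | succ m ih =>
    rw [Finset.sum_range_succ, ih]
    push_cast
    ring

private lemma sum_B2 {n M : ℕ} (hn : 0 < n) (hM : 0 < M) (a : ℝ) :
    ((n : ℝ) * M) * ∑ k ∈ Finset.range n,
        ((((k : ℝ) * M + a) / (n * M)) ^ 2 - (((k : ℝ) * M + a) / (n * M)) + 1 / 6)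
      = M * ((a / M) ^ 2 - a / M + 1 / 6) := by
  have hn' : (n : ℝ) ≠ 0 := Nat.cast_ne_zero.mpr hn.ne'
  have hM' : (M : ℝ) ≠ 0 := Nat.cast_ne_zero.mpr hM.ne'
  have hstep : ∀ k ∈ Finset.range n,
      ((((k : ℝ) * M + a) / (n * M)) ^ 2 - (((k : ℝ) * M + a) / (n * M)) + 1 / 6)
        = (1 / (n : ℝ) ^ 2) * (k : ℝ) ^ 2
          + (2 * a / ((n : ℝ) ^ 2 * M) - 1 / n) * (k : ℝ)
          + (a ^ 2 / ((n : ℝ) * M) ^ 2 - a / ((n : ℝ) * M) + 1 / 6) := by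
    intro k _
    field_simp
    ring
  rw [Finset.sum_congr rfl hstep]
  simp only [Finset.sum_add_distrib, ← Finset.mul_sum, sum_sq_range, sum_id_range,
    Finset.sum_const, Finset.card_range, nsmul_eq_mul]
  field_simp
  ring

private lemma Eaux_eq (N' : ℕ) (hN' : 0 < N') (b : ℤ) (bN : ℕ) (hbd : (bN : ℤ) = b)
    (hb0 : 0 < bN) (hbN : bN < N') (τ : UpperHalfPlane) :
    Eaux N' b ↑τ =
      Complex.exp ((Real.pi : ℂ) * I * ↑τ * N' * B₂ ((b : ℝ) / N')) *
      (Complex.exp (∑' m : ℕ, Complex.log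
          (1 - Complex.exp (2 * (Real.pi : ℂ) * I * (τ : ℂ)) ^ (m * N' + bN))) *
       Complex.exp (∑' m : ℕ, Complex.log
          (1 - Complex.exp (2 * (Real.pi : ℂ) * I * (τ : ℂ)) ^ ((m + 1) * N' - bN)))) := by
  have hc1 : ∀ m : ℕ, m + 1 ≤ m * N' + bN := fun m =>
    add_le_add (Nat.le_mul_of_pos_right m hN') hb0
  have hc2 : ∀ m : ℕ, m + 1 ≤ (m + 1) * N' - bN := by
    intro m
    have h1 : (m + 1) * N' = m * N' + N' := by ring
    have h2 : m ≤ m * N' := Nat.le_mul_of_pos_right m hN'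
    omega
  obtain ⟨hne1, hs1, hm1, hp1⟩ := family_facts τ _ hc1
  obtain ⟨hne2, hs2, hm2, hp2⟩ := family_facts τ _ hc2
  have ht1 : ∀ m : ℕ, Complex.exp (2 * (Real.pi : ℂ) * I * ↑τ * ((m : ℂ) * N' + b)) =
      Complex.exp (2 * (Real.pi : ℂ) * I * (τ : ℂ)) ^ (m * N' + bN) := by
    intro m
    rw [← Complex.exp_nat_mul]
    congr 1
    push_cast [← hbd]
    ring
  have ht2 : ∀ m : ℕ, Complex.exp (2 * (Real.pi : ℂ) * I * ↑τ * (((m : ℂ) + 1) * N' - b)) =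
      Complex.exp (2 * (Real.pi : ℂ) * I * (τ : ℂ)) ^ ((m + 1) * N' - bN) := by
    intro m
    rw [← Complex.exp_nat_mul]
    congr 1
    have hle : bN ≤ (m + 1) * N' := le_trans hbN.le (Nat.le_mul_of_pos_left N' (Nat.succ_pos m))
    push_cast [← hbd, Nat.cast_sub hle]
    ring
  unfold Eaux
  congr 1
  calc ∏' m : ℕ, ((1 - Complex.exp (2 * (Real.pi : ℂ) * I * ↑τ * ((m : ℂ) * N' + b))) *
        (1 - Complex.exp (2 * (Real.pi : ℂ) * I * ↑τ * (((m : ℂ) + 1) * N' - b))))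
      = ∏' m : ℕ, ((1 - Complex.exp (2 * (Real.pi : ℂ) * I * (τ : ℂ)) ^ (m * N' + bN)) *
        (1 - Complex.exp (2 * (Real.pi : ℂ) * I * (τ : ℂ)) ^ ((m + 1) * N' - bN))) := by
        apply tprod_congr
        intro m
        rw [ht1 m, ht2 m]
    _ = (∏' m : ℕ, (1 - Complex.exp (2 * (Real.pi : ℂ) * I * (τ : ℂ)) ^ (m * N' + bN))) *
        ∏' m : ℕ, (1 - Complex.exp (2 * (Real.pi : ℂ) * I * (τ : ℂ)) ^ ((m + 1) * N' - bN)) :=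
        hm1.tprod_mul hm2
    _ = _ := by rw [hp1, hp2]

end helpers

/-- **Distribution relation for the functions `E_a^{(N)}`.** If `N = n·M`, `0 < a < M` and
`τ ∈ ℍ`, then `∏_{k=0}^{n−1} E_{kM+a}^{(N)}(τ) = E_a^{(M)}(τ)`. -/
theorem distribution_relation_E (N M n : ℕ) (hN : 0 < N) (hM : 0 < M) (hn : 0 < n)
    (hNnM : N = n * M) (a : ℤ) (ha : 0 < a) (ha' : a < M) (τ : UpperHalfPlane) :
    ∏ k ∈ Finset.range n, E N ((k : ℤ) * M + a) (τ : ℂ) = E M a (τ : ℂ) := by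
  set aN : ℕ := a.toNat with haNdef
  have haZ : (aN : ℤ) = a := Int.toNat_of_nonneg ha.le
  have haN1 : 1 ≤ aN := by omega
  have haNM : aN < M := by omega
  -- bounds for k·M + a
  have hbZ : ∀ k, (k : ℕ) < n → ((k * M + aN : ℕ) : ℤ) = (k : ℤ) * M + a := by
    intro k _; push_cast [haZ]; ring
  have hb0 : ∀ k : ℕ, 0 < k * M + aN := fun k => by omega
  have hbltN : ∀ k : ℕ, k < n → k * M + aN < N := by
    intro k hk
    have h1 : k * M + aN < (k + 1) * M := by
      have : (k + 1) * M = k * M + M := by ring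
      omega
    calc k * M + aN < (k + 1) * M := h1
      _ ≤ n * M := Nat.mul_le_mul_right M hk
      _ = N := hNnM.symm
  -- Step A : identify E with Eaux
  have hE1 : ∀ k ∈ Finset.range n, E N ((k : ℤ) * M + a) (τ : ℂ) =
      Eaux N ((k : ℤ) * M + a) (τ : ℂ) := by
    intro k hk
    rw [Finset.mem_range] at hk
    have h0 : (0 : ℤ) ≤ (k : ℤ) * M + a := by
      rw [← hbZ k hk]; positivity
    have h1 : (k : ℤ) * M + a < (N : ℤ) := by
      rw [← hbZ k hk]
      exact_mod_cast hbltN k hk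
    unfold E
    have h2 : Int.emod ((k : ℤ) * M + a) (N : ℤ) = (k : ℤ) * M + a := Int.emod_eq_of_lt h0 h1
    have h3 : Int.ediv ((k : ℤ) * M + a) (N : ℤ) = 0 := Int.ediv_eq_zero_of_lt h0 h1
    rw [h2, h3]
    simp
  have hE2 : E M a (τ : ℂ) = Eaux M a (τ : ℂ) := by
    unfold E
    have h2 : Int.emod a (M : ℤ) = a := Int.emod_eq_of_lt ha.le ha'
    have h3 : Int.ediv a (M : ℤ) = 0 := Int.ediv_eq_zero_of_lt ha.le ha'
    rw [h2, h3]
    simp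
  rw [Finset.prod_congr rfl hE1, hE2]
  -- Step B : normal form for each Eaux
  have hEk : ∀ k ∈ Finset.range n, Eaux N ((k : ℤ) * M + a) (τ : ℂ) =
      Complex.exp ((Real.pi : ℂ) * I * ↑τ * N * B₂ ((((k : ℤ) * M + a : ℤ) : ℝ) / N)) *
      (Complex.exp (∑' m : ℕ, Complex.log
          (1 - Complex.exp (2 * (Real.pi : ℂ) * I * (τ : ℂ)) ^ (m * N + (k * M + aN)))) *
       Complex.exp (∑' m : ℕ, Complex.log
          (1 - Complex.exp (2 * (Real.pi : ℂ) * I * (τ : ℂ)) ^ ((m + 1) * N - (k * M + aN))))) := by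
    intro k hk
    rw [Finset.mem_range] at hk
    exact Eaux_eq N hN _ (k * M + aN) (hbZ k hk) (hb0 k) (hbltN k hk) τ
  rw [Finset.prod_congr rfl hEk, Eaux_eq M hM a aN haZ (by omega) haNM τ,
    Finset.prod_mul_distrib, Finset.prod_mul_distrib, ← Complex.exp_sum, ← Complex.exp_sum,
    ← Complex.exp_sum]
  -- the three sum identities
  have hq := family_facts τ
  -- (E2)
  obtain ⟨-, hsF, -, -⟩ := hq (fun j => j * M + aN) (fun j => by
    show j + 1 ≤ j * M + aN
    have := Nat.le_mul_of_pos_right j hM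
    omega)
  have hS1 : ∑ k ∈ Finset.range n, ∑' m : ℕ, Complex.log
        (1 - Complex.exp (2 * (Real.pi : ℂ) * I * (τ : ℂ)) ^ (m * N + (k * M + aN)))
      = ∑' j : ℕ, Complex.log
        (1 - Complex.exp (2 * (Real.pi : ℂ) * I * (τ : ℂ)) ^ (j * M + aN)) := by
    have hrw : ∀ k ∈ Finset.range n, ∑' m : ℕ, Complex.log
          (1 - Complex.exp (2 * (Real.pi : ℂ) * I * (τ : ℂ)) ^ (m * N + (k * M + aN)))
        = ∑' m : ℕ, Complex.log
          (1 - Complex.exp (2 * (Real.pi : ℂ) * I * (τ : ℂ)) ^ ((m * n + k) * M + aN)) := by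
      intro k _
      apply tsum_congr
      intro m
      have : m * N + (k * M + aN) = (m * n + k) * M + aN := by rw [hNnM]; ring
      rw [this]
    rw [Finset.sum_congr rfl hrw]
    exact tsum_residue_classes hsF hn
  -- (E3)
  obtain ⟨-, hsG, -, -⟩ := hq (fun j => (j + 1) * M - aN) (fun j => by
    show j + 1 ≤ (j + 1) * M - aN
    have h1 : (j + 1) * M = j * M + M := by ring
    have h2 : j ≤ j * M := Nat.le_mul_of_pos_right j hM
    omega)
  have hS2 : ∑ k ∈ Finset.range n, ∑' m : ℕ, Complex.log
        (1 - Complex.exp (2 * (Real.pi : ℂ) * I * (τ : ℂ)) ^ ((m + 1) * N - (k * M + aN)))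
      = ∑' j : ℕ, Complex.log
        (1 - Complex.exp (2 * (Real.pi : ℂ) * I * (τ : ℂ)) ^ ((j + 1) * M - aN)) := by
    have hrw : ∀ k ∈ Finset.range n, ∑' m : ℕ, Complex.log
          (1 - Complex.exp (2 * (Real.pi : ℂ) * I * (τ : ℂ)) ^ ((m + 1) * N - (k * M + aN)))
        = (fun j => ∑' m : ℕ, Complex.log
          (1 - Complex.exp (2 * (Real.pi : ℂ) * I * (τ : ℂ)) ^ ((m * n + j + 1) * M - aN)))
            (n - 1 - k) := by
      intro k hk
      rw [Finset.mem_range] at hk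
      apply tsum_congr
      intro m
      have hexp : (m + 1) * N - (k * M + aN) = (m * n + (n - 1 - k) + 1) * M - aN := by
        have e0 : m * n + (n - 1 - k) + 1 = m * n + (n - k) := by omega
        have e1 : (n - k) * M + k * M = n * M := by
          rw [← Nat.add_mul]
          congr 1
          omega
        have e2 : (m * n + (n - k)) * M = m * n * M + (n - k) * M := by ring
        have e3 : (m + 1) * N = m * n * M + n * M := by rw [hNnM]; ring
        have e4 : aN ≤ (n - k) * M := by
          have : M ≤ (n - k) * M := Nat.le_mul_of_pos_left M (by omega)
          omega
        rw [e0, e2, e3]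
        have key : ∀ X Y C D e : ℕ, D + C = Y → e ≤ D → X + Y - (C + e) = X + D - e := by
          intros X Y C D e u1 u2
          omega
        exact key _ _ _ _ _ e1 e4
      rw [hexp]
    rw [Finset.sum_congr rfl hrw]
    refine (Finset.sum_range_reflect (fun j => ∑' m : ℕ, Complex.log
      (1 - Complex.exp (2 * (Real.pi : ℂ) * I * (τ : ℂ)) ^ ((m * n + j + 1) * M - aN))) n).trans ?_
    have hrw2 : ∀ k ∈ Finset.range n, ∑' m : ℕ, Complex.log
          (1 - Complex.exp (2 * (Real.pi : ℂ) * I * (τ : ℂ)) ^ ((m * n + k + 1) * M - aN))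
        = ∑' m : ℕ, (fun j => Complex.log
          (1 - Complex.exp (2 * (Real.pi : ℂ) * I * (τ : ℂ)) ^ ((j + 1) * M - aN))) (m * n + k) :=
      fun k _ => rfl
    rw [Finset.sum_congr rfl hrw2]
    exact tsum_residue_classes hsG hn
  -- (E1)
  have hS0 : ∑ k ∈ Finset.range n,
        ((Real.pi : ℂ) * I * ↑τ * N * B₂ ((((k : ℤ) * M + a : ℤ) : ℝ) / N))
      = (Real.pi : ℂ) * I * ↑τ * M * B₂ ((a : ℝ) / M) := by
    have hNR : (0 : ℝ) < (N : ℝ) := by exact_mod_cast hN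
    have hMR : (0 : ℝ) < (M : ℝ) := by exact_mod_cast hM
    have hfr : ∀ k ∈ Finset.range n, B₂ ((((k : ℤ) * M + a : ℤ) : ℝ) / N)
        = (((k : ℝ) * M + (a : ℝ)) / ((n : ℝ) * M)) ^ 2
          - ((k : ℝ) * M + (a : ℝ)) / ((n : ℝ) * M) + 1 / 6 := by
      intro k hk
      rw [Finset.mem_range] at hk
      have hx : (((k : ℤ) * M + a : ℤ) : ℝ) / N = ((k : ℝ) * M + (a : ℝ)) / ((n : ℝ) * M) := by
        rw [hNnM]
        push_cast
        ring
      have h0 : 0 ≤ ((k : ℝ) * M + (a : ℝ)) / ((n : ℝ) * M) := by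
        apply div_nonneg _ (by positivity)
        have : (0 : ℝ) < (a : ℝ) := by exact_mod_cast ha
        positivity
      have h1 : ((k : ℝ) * M + (a : ℝ)) / ((n : ℝ) * M) < 1 := by
        rw [div_lt_one (by positivity)]
        have hb := hbltN k hk
        have : ((k * M + aN : ℕ) : ℝ) < ((N : ℕ) : ℝ) := by exact_mod_cast hb
        rw [hNnM] at this
        push_cast at this
        have haR : ((aN : ℕ) : ℝ) = (a : ℝ) := by exact_mod_cast haZ
        rw [haR] at this
        linarith
      rw [hx]
      unfold B₂
      rw [Int.fract_eq_self.mpr ⟨h0, h1⟩]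
    have hfr2 : B₂ ((a : ℝ) / M) = ((a : ℝ) / M) ^ 2 - (a : ℝ) / M + 1 / 6 := by
      have h0 : 0 ≤ (a : ℝ) / M := by
        apply div_nonneg _ hMR.le
        exact_mod_cast ha.le
      have h1 : (a : ℝ) / M < 1 := by
        rw [div_lt_one hMR]
        exact_mod_cast ha'
      unfold B₂
      rw [Int.fract_eq_self.mpr ⟨h0, h1⟩]
    have hreal : (N : ℝ) * ∑ k ∈ Finset.range n, B₂ ((((k : ℤ) * M + a : ℤ) : ℝ) / N)
        = (M : ℝ) * B₂ ((a : ℝ) / M) := by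
      rw [Finset.sum_congr rfl hfr, hfr2]
      rw [show ((N : ℕ) : ℝ) = (n : ℝ) * M by rw [hNnM]; push_cast; ring]
      exact sum_B2 hn hM (a : ℝ)
    calc ∑ k ∈ Finset.range n,
          ((Real.pi : ℂ) * I * ↑τ * N * B₂ ((((k : ℤ) * M + a : ℤ) : ℝ) / N))
        = ((Real.pi : ℂ) * I * ↑τ) * ∑ k ∈ Finset.range n,
            (((N : ℝ) * B₂ ((((k : ℤ) * M + a : ℤ) : ℝ) / N) : ℝ) : ℂ) := by
          rw [Finset.mul_sum]
          apply Finset.sum_congr rfl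
          intro k _
          push_cast
          ring
      _ = ((Real.pi : ℂ) * I * ↑τ) *
            (((N : ℝ) * ∑ k ∈ Finset.range n, B₂ ((((k : ℤ) * M + a : ℤ) : ℝ) / N) : ℝ) : ℂ) := by
          rw [← Complex.ofReal_sum, ← Finset.mul_sum]
      _ = ((Real.pi : ℂ) * I * ↑τ) * (((M : ℝ) * B₂ ((a : ℝ) / M) : ℝ) : ℂ) := by rw [hreal]
      _ = (Real.pi : ℂ) * I * ↑τ * M * B₂ ((a : ℝ) / M) := by
          push_cast
          ring
  rw [hS0, hS1, hS2]
end

section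
/- Let n ≥ 2 be an integer and let Λ ⊆ ℝⁿ be the additive subgroup generated by the n−1 vectors e_i − e_{i+1} (i = 1,…,n−1), where e_1,…,e_n is the standard basis; equivalently, Λ is the set of integer vectors whose coordinates sum to 0. Let v_1,…,v_{n−1} ∈ Λ be vectors that are linearly independent over ℚ and let Λ' be the additive subgroup they generate. Let v_n = (c_1,…,c_n) ∈ ℝⁿ with c_1 + ⋯ + c_n ≠ 0, and let M be the n×n real matrix whose i-th row is v_i (i = 1,…,n). Then Λ' has finite index in Λ and the index [Λ : Λ'] equals |det M| / |c_1 + ⋯ + c_n|. -/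
/-- The lattice `Λ ⊆ ℝⁿ` generated by the vectors `eᵢ − eᵢ₊₁`: equivalently, the additive
subgroup of integer vectors whose coordinates sum to `0`. -/
def sumZeroIntLattice (n : ℕ) : AddSubgroup (Fin n → ℝ) where
  carrier := {x | (∀ i, ∃ m : ℤ, x i = m) ∧ ∑ i, x i = 0}
  zero_mem' := ⟨fun i => ⟨0, by simp⟩, by simp⟩
  add_mem' := by
    rintro x y ⟨hx, hsx⟩ ⟨hy, hsy⟩
    refine ⟨fun i => ?_, ?_⟩
    · obtain ⟨m, hm⟩ := hx i
      obtain ⟨m', hm'⟩ := hy i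
      exact ⟨m + m', by simp [Pi.add_apply, hm, hm']⟩
    · simp [Pi.add_apply, Finset.sum_add_distrib, hsx, hsy]
  neg_mem' := by
    rintro x ⟨hx, hsx⟩
    refine ⟨fun i => ?_, ?_⟩
    · obtain ⟨m, hm⟩ := hx i
      exact ⟨-m, by simp [hm]⟩
    · simp [hsx]

open Submodule in

lemma lemA {k : ℕ} (w : Fin k → (Fin k → ℤ)) (hw : LinearIndependent ℤ w) :
    (AddSubgroup.closure (Set.range w)).index = (Matrix.of w).det.natAbs ∧
      (Matrix.of w).det ≠ 0 := by
  classical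
  obtain ⟨m, snf⟩ := (Submodule.span ℤ (Set.range w)).smithNormalForm (Pi.basisFun ℤ (Fin k))
  have hmk : m = k := by
    simpa using (Fintype.card_congr (snf.bN.indexEquiv (Module.Basis.span hw)))
  subst hmk
  let N := Submodule.span ℤ (Set.range w)
  have hfbij : Function.Bijective snf.f := Finite.injective_iff_bijective.mp snf.f.injective
  let σ : Fin m ≃ Fin m := Equiv.ofBijective snf.f hfbij
  have hσ : ∀ i, σ i = snf.f i := fun i => rfl
  have ha : ∀ i, snf.a i ≠ 0 := by
    intro i h
    apply snf.bN.ne_zero i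
    have := snf.snf i
    rw [h, zero_smul] at this
    exact Subtype.ext this
  -- membership criterion
  have mem_iff : ∀ x : Fin m → ℤ, x ∈ N ↔ ∀ i, snf.a i ∣ snf.bM.repr x (snf.f i) := by
    intro x
    constructor
    · intro hx i
      have := snf.repr_apply_embedding_eq_repr_smul (m := ⟨x, hx⟩) (i := i)
      rw [this, map_smul]
      exact ⟨snf.bN.repr ⟨x, hx⟩ i, by simp [smul_eq_mul]⟩
    · intro hx
      choose c hc using hx
      have hy : (∑ i, c i • (snf.bN i : Fin m → ℤ)) ∈ N := by
        exact Submodule.sum_mem _ fun i _ => Submodule.smul_mem _ _ (snf.bN i).2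
      have hxy : x = ∑ i, c i • (snf.bN i : Fin m → ℤ) := by
        apply snf.bM.ext_elem
        intro j
        obtain ⟨i, rfl⟩ := hfbij.2 j
        rw [map_sum, Finsupp.coe_finset_sum, Finset.sum_apply]
        have : ∀ i' : Fin m, (snf.bM.repr (c i' • (snf.bN i' : Fin m → ℤ))) (snf.f i)
            = if i' = i then snf.a i * c i else 0 := by
          intro i'
          rw [map_smul, snf.snf i', map_smul, snf.bM.repr_self]
          simp only [Finsupp.smul_apply, Finsupp.single_apply, snf.f.injective.eq_iff]
          by_cases h : i' = i <;> simp [h, mul_comm, smul_eq_mul]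
        rw [Finset.sum_congr rfl fun i' _ => this i']
        simp [hc i]
      rw [hxy]; exact hy
  -- cardinality of the quotient
  have hcard : Nat.card ((Fin m → ℤ) ⧸ N) = ∏ i, (snf.a i).natAbs := by
    let E : (Fin m → ℤ) ≃ₗ[ℤ] (Fin m → ℤ) :=
      snf.bM.equivFun.trans (LinearEquiv.funCongrLeft ℤ ℤ σ)
    have hE : ∀ x i, E x i = snf.bM.repr x (snf.f i) := by
      intro x i
      simp [E, LinearEquiv.funCongrLeft, Module.Basis.equivFun_apply, hσ]
    let N' : Submodule ℤ (Fin m → ℤ) := Submodule.pi Set.univ fun i => Ideal.span {snf.a i}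
    have hmapN : N.map (E : (Fin m → ℤ) →ₗ[ℤ] (Fin m → ℤ)) = N' := by
      ext y
      simp only [Submodule.mem_map, N', Submodule.mem_pi, Set.mem_univ, forall_true_left, LinearEquiv.coe_coe,
        Ideal.mem_span_singleton]
      constructor
      · rintro ⟨x, hx, rfl⟩ i
        rw [hE]
        exact (mem_iff x).mp hx i
      · intro hy
        refine ⟨E.symm y, ?_, E.apply_symm_apply y⟩
        rw [mem_iff]
        intro i
        rw [← hE, E.apply_symm_apply]
        exact hy i
    have e1 : ((Fin m → ℤ) ⧸ N) ≃ₗ[ℤ] ((Fin m → ℤ) ⧸ N') :=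
      Submodule.Quotient.equiv N N' E hmapN
    have e2 : ((Fin m → ℤ) ⧸ N') ≃ₗ[ℤ] ∀ i, ℤ ⧸ Ideal.span {snf.a i} :=
      Submodule.quotientPi _
    calc Nat.card ((Fin m → ℤ) ⧸ N) = Nat.card (∀ i, ℤ ⧸ Ideal.span {snf.a i}) :=
          Nat.card_congr (e1.toEquiv.trans e2.toEquiv)
      _ = ∏ i, Nat.card (ℤ ⧸ Ideal.span {snf.a i}) := Nat.card_pi
      _ = ∏ i, (snf.a i).natAbs := by
          refine Finset.prod_congr rfl fun i _ => ?_
          rw [Nat.card_congr (Int.quotientSpanEquivZMod (snf.a i)).toEquiv, Nat.card_zmod]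
  -- determinant equals product of smith coefficients
  have hdet : (Matrix.of w).det.natAbs = ∏ i, (snf.a i).natAbs := by
    let bW : Module.Basis (Fin m) ℤ N := Module.Basis.span hw
    let eW : (Fin m → ℤ) ≃ₗ[ℤ] N := (Pi.basisFun ℤ (Fin m)).equiv bW (Equiv.refl _)
    let eS : (Fin m → ℤ) ≃ₗ[ℤ] N := (snf.bM.reindex σ.symm).equiv snf.bN (Equiv.refl _)
    have h1 : LinearMap.det (N.subtype ∘ₗ (eW : (Fin m → ℤ) →ₗ[ℤ] N)) = (Matrix.of w).det := by
      rw [← LinearMap.det_toMatrix (Pi.basisFun ℤ (Fin m))]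
      have hM : LinearMap.toMatrix (Pi.basisFun ℤ (Fin m)) (Pi.basisFun ℤ (Fin m))
          (N.subtype ∘ₗ (eW : (Fin m → ℤ) →ₗ[ℤ] N)) = (Matrix.of w).transpose := by
        apply Matrix.ext; intro i j
        rw [LinearMap.toMatrix_apply, LinearMap.comp_apply]
        have h0 : (eW : (Fin m → ℤ) →ₗ[ℤ] N) ((Pi.basisFun ℤ (Fin m)) j) = bW j :=
          (Pi.basisFun ℤ (Fin m)).equiv_apply j bW (Equiv.refl _)
        rw [h0]
        have h0' : N.subtype (bW j) = w j := congrArg Subtype.val (Module.Basis.span_apply hw j)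
        rw [h0', Pi.basisFun_repr, Matrix.transpose_apply, Matrix.of_apply]
      rw [hM, Matrix.det_transpose]
    have h2 : LinearMap.det (N.subtype ∘ₗ (eS : (Fin m → ℤ) →ₗ[ℤ] N)) = ∏ i, snf.a i := by
      rw [← LinearMap.det_toMatrix (snf.bM.reindex σ.symm)]
      have hM : LinearMap.toMatrix (snf.bM.reindex σ.symm) (snf.bM.reindex σ.symm)
          (N.subtype ∘ₗ (eS : (Fin m → ℤ) →ₗ[ℤ] N)) = Matrix.diagonal snf.a := by
        apply Matrix.ext; intro i j
        rw [LinearMap.toMatrix_apply, LinearMap.comp_apply]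
        have h0 : (eS : (Fin m → ℤ) →ₗ[ℤ] N) ((snf.bM.reindex σ.symm) j) = snf.bN j :=
          (snf.bM.reindex σ.symm).equiv_apply j snf.bN (Equiv.refl _)
        rw [h0]
        have h0' : N.subtype (snf.bN j) = snf.a j • snf.bM (snf.f j) := snf.snf j
        rw [h0', map_smul, Finsupp.smul_apply, Module.Basis.repr_reindex_apply, Equiv.symm_symm,
          Module.Basis.repr_self, Finsupp.single_apply, hσ]
        by_cases h : i = j
        · simp [h, Matrix.diagonal_apply_eq]
        · rw [Matrix.diagonal_apply_ne _ h]
          rw [if_neg (by simpa [snf.f.injective.eq_iff] using Ne.symm h)]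
          simp
      rw [hM, Matrix.det_diagonal]
    have hassoc := Int.natAbs_eq_iff_associated.mpr
      (LinearMap.associated_det_comp_equiv (N.subtype) eW eS)
    rw [h1, h2] at hassoc
    rw [hassoc]
    exact map_prod Int.natAbsHom snf.a Finset.univ
  have hindex : (AddSubgroup.closure (Set.range w)).index = Nat.card ((Fin m → ℤ) ⧸ N) := by
    rw [← Submodule.span_int_eq_addSubgroupClosure]
    rfl
  refine ⟨?_, ?_⟩
  · rw [hindex, hcard, hdet]
  · intro h
    rw [h] at hdet
    simp only [Int.natAbs_zero] at hdet
    exact absurd hdet.symm (Finset.prod_ne_zero_iff.mpr fun i _ => Int.natAbs_ne_zero.mpr (ha i))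


lemma mainAux (k : ℕ) (v : Fin k → (Fin (k+1) → ℝ))
    (hv : ∀ i, v i ∈ sumZeroIntLattice (k+1))
    (hli : LinearIndependent ℚ v) :
    ∃ W : Matrix (Fin k) (Fin k) ℤ, (∀ i j, (W i j : ℝ) = v i j.castSucc) ∧ W.det ≠ 0 ∧
      ((AddSubgroup.closure (Set.range v)).addSubgroupOf (sumZeroIntLattice (k+1))).index
        = W.det.natAbs := by
  classical
  -- the integer coordinates of the `v i`
  have hvz : ∀ i j, ∃ m : ℤ, v i j = m := fun i => (hv i).1
  choose w hwv using fun i (j : Fin k) => hvz i j.castSucc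
  have hvlast : ∀ i, v i (Fin.last k) = -∑ j : Fin k, v i j.castSucc := by
    intro i
    have := (hv i).2
    rw [Fin.sum_univ_castSucc] at this
    linarith
  -- the additive iso between the lattice and ℤ^k
  let gfun : (Fin k → ℤ) → (Fin (k+1) → ℝ) := fun m =>
    fun j => Fin.lastCases (-(∑ i, (m i : ℝ))) (fun j' => (m j' : ℝ)) j
  have hgmem : ∀ m, gfun m ∈ sumZeroIntLattice (k+1) := by
    intro m
    constructor
    · intro j
      induction j using Fin.lastCases with
      | last => exact ⟨-∑ i, m i, by simp [gfun, Fin.lastCases_last]⟩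
      | cast j' => exact ⟨m j', by simp [gfun, Fin.lastCases_castSucc]⟩
    · rw [Fin.sum_univ_castSucc]
      simp [gfun, Fin.lastCases_last, Fin.lastCases_castSucc]
  let g : (Fin k → ℤ) →+ (sumZeroIntLattice (k+1)) :=
    AddMonoidHom.mk' (fun m => ⟨gfun m, hgmem m⟩) (by
      intro m m'
      apply Subtype.ext
      funext j
      induction j using Fin.lastCases with
      | last =>
        simp [gfun, Fin.lastCases_last, Finset.sum_add_distrib]
        ring
      | cast j' => simp [gfun, Fin.lastCases_castSucc])
  have hg_inj : Function.Injective g := by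
    intro m m' h
    funext j
    have := congrFun (congrArg Subtype.val h) j.castSucc
    simpa [g, gfun, Fin.lastCases_castSucc, Int.cast_injective.eq_iff] using this
  have hg_surj : Function.Surjective g := by
    rintro ⟨x, hx⟩
    choose m hm using hx.1
    refine ⟨fun j => m j.castSucc, ?_⟩
    apply Subtype.ext
    funext j
    induction j using Fin.lastCases with
    | last =>
      have hsum := hx.2
      rw [Fin.sum_univ_castSucc] at hsum
      simp only [g, AddMonoidHom.mk'_apply, gfun, Fin.lastCases_last]
      have : ∑ i : Fin k, x i.castSucc = ∑ i : Fin k, ((m i.castSucc : ℤ) : ℝ) :=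
        Finset.sum_congr rfl fun i _ => hm i.castSucc
      rw [← this]
      linarith
    | cast j' =>
      simp only [g, AddMonoidHom.mk'_apply, gfun, Fin.lastCases_castSucc]
      exact (hm j'.castSucc).symm
  let g' : (Fin k → ℤ) ≃+ (sumZeroIntLattice (k+1)) := AddEquiv.ofBijective g ⟨hg_inj, hg_surj⟩
  have hgw : ∀ i, (g (w i) : Fin (k+1) → ℝ) = v i := by
    intro i
    funext j
    induction j using Fin.lastCases with
    | last =>
      simp only [g, AddMonoidHom.mk'_apply, gfun, Fin.lastCases_last]
      rw [hvlast i]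
      congr 1
      exact Finset.sum_congr rfl fun j' _ => (hwv i j').symm
    | cast j' =>
      simp only [g, AddMonoidHom.mk'_apply, gfun, Fin.lastCases_castSucc]
      exact (hwv i j').symm
  -- linear independence of w over ℤ
  have hw_li : LinearIndependent ℤ w := by
    rw [Fintype.linearIndependent_iff]
    intro z hz
    have hz' : ∀ j' : Fin k, ∑ i, (z i : ℝ) * (w i j' : ℝ) = 0 := by
      intro j'
      have h1 := congrFun hz j'
      have h0 : ∑ i, z i * w i j' = 0 := by
        simpa [Finset.sum_apply, smul_eq_mul] using h1
      have h2 : ((∑ i, z i * w i j' : ℤ) : ℝ) = 0 := by rw [h0]; simp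
      push_cast at h2
      exact h2
    have hvz : ∑ i, (z i : ℚ) • v i = 0 := by
      funext j
      rw [Finset.sum_apply]
      induction j using Fin.lastCases with
      | last =>
        simp only [Pi.smul_apply, Rat.smul_def, Rat.cast_intCast, Pi.zero_apply]
        have hterm : ∀ i, (z i : ℝ) * v i (Fin.last k)
            = ∑ j' : Fin k, -((z i : ℝ) * (w i j' : ℝ)) := by
          intro i
          rw [hvlast i]
          simp only [hwv]
          rw [mul_neg, Finset.mul_sum]
          rw [← Finset.sum_neg_distrib]
        rw [Finset.sum_congr rfl fun i _ => hterm i, Finset.sum_comm]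
        refine Finset.sum_eq_zero fun j' _ => ?_
        rw [Finset.sum_neg_distrib, hz' j', neg_zero]
      | cast j' =>
        simp only [Pi.smul_apply, Rat.smul_def, Rat.cast_intCast, Pi.zero_apply]
        have : ∀ i, v i j'.castSucc = (w i j' : ℝ) := fun i => hwv i j'
        rw [Finset.sum_congr rfl fun i _ => by rw [this i]]
        exact hz' j'
    have hzero := Fintype.linearIndependent_iff.mp hli (fun i => (z i : ℚ)) hvz
    intro i
    exact_mod_cast show ((z i : ℚ)) = 0 from hzero i
  -- identify the subgroup through the iso
  obtain ⟨hidxA, hdetA⟩ := lemA w hw_li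
  have hrange_sub : Set.range v ⊆ (sumZeroIntLattice (k+1) : Set (Fin (k+1) → ℝ)) := by
    rintro x ⟨i, rfl⟩; exact hv i
  have hmapc : AddSubgroup.map g'.toAddMonoidHom (AddSubgroup.closure (Set.range w))
      = (AddSubgroup.closure (Set.range v)).addSubgroupOf (sumZeroIntLattice (k+1)) := by
    apply AddSubgroup.map_injective (AddSubgroup.subtype_injective (sumZeroIntLattice (k+1)))
    rw [AddSubgroup.addSubgroupOf_map_subtype, inf_eq_left.mpr
      ((AddSubgroup.closure_le _).mpr hrange_sub)]
    rw [AddSubgroup.map_map]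
    rw [AddMonoidHom.map_closure]
    congr 1
    rw [← Set.range_comp]
    refine congrArg Set.range (funext fun i => ?_)
    show (sumZeroIntLattice (k+1)).subtype (g'.toAddMonoidHom (w i)) = v i
    exact hgw i
  have hidx : ((AddSubgroup.closure (Set.range v)).addSubgroupOf
      (sumZeroIntLattice (k+1))).index = (AddSubgroup.closure (Set.range w)).index := by
    rw [← hmapc]
    have hmc : AddSubgroup.map g'.toAddMonoidHom (AddSubgroup.closure (Set.range w))
        = AddSubgroup.comap g'.symm.toAddMonoidHom (AddSubgroup.closure (Set.range w)) := by
      ext x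
      simp only [AddSubgroup.mem_map, AddSubgroup.mem_comap, AddEquiv.coe_toAddMonoidHom]
      constructor
      · rintro ⟨y, hy, rfl⟩
        simpa [g'.symm_apply_apply] using hy
      · intro hx
        exact ⟨g'.symm x, hx, g'.apply_symm_apply x⟩
    rw [hmc]
    exact AddSubgroup.index_comap_of_surjective _ g'.symm.surjective
  exact ⟨Matrix.of w, fun i j => (hwv i j).symm, hdetA, by rw [hidx, hidxA]⟩

lemma lemB {k : ℕ} (M : Matrix (Fin (k+1)) (Fin (k+1)) ℝ)
    (hrow : ∀ i : Fin k, ∑ j, M i.castSucc j = 0) :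
    M.det = (∑ j, M (Fin.last k) j) *
      (Matrix.of fun i j : Fin k => M i.castSucc j.castSucc).det := by
  classical
  let T : Matrix (Fin (k+1)) (Fin (k+1)) ℝ :=
    Matrix.of fun i j => if i = j then 1 else if j = Fin.last k then 1 else 0
  have hTtri : T.BlockTriangular id := by
    intro i j hij
    have h1 : i ≠ j := fun h => by subst h; exact lt_irrefl _ hij
    have h2 : j ≠ Fin.last k := by
      intro h; subst h
      exact absurd hij (not_lt.mpr (Fin.le_last i))
    simp [T, h1, h2]
  have hTdet : T.det = 1 := by
    rw [Matrix.det_of_upperTriangular hTtri]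
    simp [T]
  have hMT : ∀ i j, (M * T) i j = if j = Fin.last k then ∑ l, M i l else M i j := by
    intro i j
    rw [Matrix.mul_apply]
    by_cases hj : j = Fin.last k
    · subst hj
      simp only [if_pos rfl]
      refine Finset.sum_congr rfl fun l _ => ?_
      by_cases h : l = Fin.last k <;> simp [T, h]
    · rw [if_neg hj]
      rw [Finset.sum_eq_single j]
      · simp [T]
      · intro l _ hl
        simp [T, hl, hj]
      · simp
  have key : (M * T).det = M.det := by rw [Matrix.det_mul, hTdet, mul_one]
  rw [← key]
  rw [Matrix.det_succ_column (M * T) (Fin.last k)]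
  rw [Fin.sum_univ_castSucc]
  have hzero : ∀ i : Fin k,
      (-1 : ℝ) ^ ((i.castSucc : ℕ) + (Fin.last k : ℕ)) * (M * T) i.castSucc (Fin.last k) *
        (((M * T).submatrix i.castSucc.succAbove (Fin.last k).succAbove).det) = 0 := by
    intro i
    rw [hMT, if_pos rfl, hrow i]
    ring
  rw [Finset.sum_congr rfl fun i _ => hzero i, Finset.sum_const_zero, zero_add]
  have hlast : (M * T) (Fin.last k) (Fin.last k) = ∑ l, M (Fin.last k) l := by
    rw [hMT, if_pos rfl]
  rw [hlast]
  have hpow : (-1 : ℝ) ^ ((Fin.last k : ℕ) + (Fin.last k : ℕ)) = 1 := by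
    rw [← two_mul, pow_mul]
    norm_num
  rw [hpow, one_mul]
  congr 1
  have : ((M * T).submatrix (Fin.last k).succAbove (Fin.last k).succAbove) =
      (Matrix.of fun i j : Fin k => M i.castSucc j.castSucc) := by
    apply Matrix.ext; intro i j
    rw [Matrix.submatrix_apply, Fin.succAbove_last, hMT]
    rw [if_neg (Fin.castSucc_lt_last j).ne, Matrix.of_apply]
  rw [this]

/-- **Lattice index lemma.** Let `Λ ⊆ ℝⁿ` be the lattice of integer vectors with coordinate
sum `0` (generated by the `eᵢ − eᵢ₊₁`), let `Λ'` be the sublattice generated by vectors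
`v₁, …, v_{n−1} ∈ Λ` that are linearly independent over `ℚ`, and let `M` be the `n × n`
matrix whose first `n−1` rows are the `vᵢ` and whose last row is a vector `c` with
`∑ᵢ cᵢ ≠ 0`. Then `Λ'` has finite index in `Λ` equal to `|det M| / |∑ᵢ cᵢ|`. -/
theorem lattice_index_formula (n : ℕ) (hn : 2 ≤ n)
    (v : Fin (n - 1) → (Fin n → ℝ)) (hv : ∀ i, v i ∈ sumZeroIntLattice n)
    (hli : LinearIndependent ℚ v)
    (c : Fin n → ℝ) (hc : ∑ i, c i ≠ 0)
    (M : Matrix (Fin n) (Fin n) ℝ)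
    (hMv : ∀ (i : Fin n) (h : (i : ℕ) < n - 1), M i = v ⟨i, h⟩)
    (hMc : ∀ i : Fin n, ¬ ((i : ℕ) < n - 1) → M i = c) :
    ((AddSubgroup.closure (Set.range v)).addSubgroupOf (sumZeroIntLattice n)).index ≠ 0 ∧
      (((AddSubgroup.closure (Set.range v)).addSubgroupOf (sumZeroIntLattice n)).index : ℝ) =
        |M.det| / |∑ i, c i| := by
  classical
  obtain ⟨k, rfl⟩ : ∃ k, n = k + 1 := ⟨n - 1, by omega⟩
  obtain ⟨W, hW, hWdet, hWidx⟩ := mainAux k v hv hli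
  have hrow : ∀ i : Fin k, ∑ j, M i.castSucc j = 0 := by
    intro i
    have hlt : ((i.castSucc : Fin (k+1)) : ℕ) < k + 1 - 1 := by simpa using i.isLt
    rw [hMv i.castSucc hlt]
    have heq : (⟨((i.castSucc : Fin (k+1)) : ℕ), hlt⟩ : Fin (k + 1 - 1)) = i :=
      Fin.ext (by simp)
    rw [heq]
    exact (hv i).2
  have hlastrow : M (Fin.last k) = c := hMc (Fin.last k) (by simp)
  have hdetM : M.det = (∑ j, c j) * ((W.det : ℝ)) := by
    rw [lemB M hrow]
    congr 1
    · rw [hlastrow]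
    · have hm : (Matrix.of fun i j : Fin k => M i.castSucc j.castSucc)
          = W.map (Int.cast : ℤ → ℝ) := by
        apply Matrix.ext; intro i j
        have hlt : ((i.castSucc : Fin (k+1)) : ℕ) < k + 1 - 1 := by simpa using i.isLt
        rw [Matrix.of_apply, Matrix.map_apply, hMv i.castSucc hlt]
        have heq : (⟨((i.castSucc : Fin (k+1)) : ℕ), hlt⟩ : Fin (k + 1 - 1)) = i :=
          Fin.ext (by simp)
        rw [heq, hW i j]
      rw [hm]
      rw [show W.map (Int.cast : ℤ → ℝ) = (Int.castRingHom ℝ).mapMatrix W from rfl,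
        ← RingHom.map_det (Int.castRingHom ℝ) W]
      rfl
  constructor
  · rw [hWidx]
    exact Int.natAbs_ne_zero.mpr hWdet
  · rw [hWidx, hdetM, abs_mul]
    rw [Nat.cast_natAbs, Int.cast_abs]
    rw [mul_comm, mul_div_assoc, div_self (abs_ne_zero.mpr hc), mul_one]
end

section
/- Let N ≥ 4 be an integer and let G = (ℤ/Nℤ)ˣ/±1 be the quotient of the unit group of ℤ/Nℤ by the subgroup {±1}. Define f : G → ℚ by f([a]) = (N/2)·B₂({a/N}) for any integer representative a of the class [a]; this is well defined since B₂({−x}) = B₂({x}). Let M be the G×G matrix with entry M(x,y) = f(x·y⁻¹). Then det M = ∏_χ (1/4)·B_{2,χ}, where the product ranges over all even Dirichlet characters χ modulo N (χ even meaning χ(−1) = 1). -/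
open scoped Classical

/-- The generalized Bernoulli number `B_{2,χ} = N·∑_{a=1}^{N} χ(a)·B₂(a/N)` of a Dirichlet
character `χ` modulo `N`. -/
noncomputable def B2chi {N : ℕ} (χ : DirichletCharacter ℂ N) : ℂ :=
  (N : ℂ) * ∑ a ∈ Finset.Icc 1 N, χ (a : ZMod N) * ((B₂ ((a : ℝ) / N) : ℝ) : ℂ)

/-- The group `(ℤ/Nℤ)ˣ/±1`. -/
abbrev unitsModPM (N : ℕ) : Type :=
  (ZMod N)ˣ ⧸ Subgroup.zpowers (-1 : (ZMod N)ˣ)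

noncomputable instance (N : ℕ) [NeZero N] : Fintype (unitsModPM N) :=
  Fintype.ofFinite _

lemma sum_hom_eq_zero {G : Type*} [CommGroup G] [Fintype G] {ψ : G →* ℂˣ} (h : ψ ≠ 1) :
    ∑ g : G, (ψ g : ℂ) = 0 := by
  obtain ⟨b, hb⟩ : ∃ b, ψ b ≠ 1 := by
    by_contra hc; push_neg at hc; exact h (MonoidHom.ext fun x => hc x)
  have key : (ψ b : ℂ) * ∑ g : G, (ψ g : ℂ) = ∑ g : G, (ψ g : ℂ) := by
    rw [Finset.mul_sum]
    exact Fintype.sum_bijective _ (Group.mulLeft_bijective b) _ _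
      (fun x => by rw [← Units.val_mul, ← map_mul])
  have hb' : (ψ b : ℂ) ≠ 1 := fun hc => hb (Units.ext hc)
  have := sub_eq_zero.mpr key
  rw [← sub_one_mul] at this
  rcases mul_eq_zero.mp this with h1 | h2
  · exact absurd (by linear_combination h1) hb'
  · exact h2

/-- The Dedekind group determinant for a finite abelian group, over `ℂ`. -/
lemma dedekind_det {G : Type*} [CommGroup G] [Fintype G] [DecidableEq G] [Fintype (G →* ℂˣ)]
    (f : G → ℂ) :
    (Matrix.of fun x y : G => f (x * y⁻¹)).det
      = ∏ ψ : G →* ℂˣ, ∑ g : G, (ψ g : ℂ) * f g := by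
  obtain ⟨e⟩ := CommGroup.monoidHom_mulEquiv_of_hasEnoughRootsOfUnity G ℂ
  set M : Matrix G G ℂ := Matrix.of fun x y : G => f (x * y⁻¹) with hMdef
  set ψ : G → (G →* ℂˣ) := fun i => e.symm i with hψ
  set U : Matrix G G ℂ := Matrix.of (fun i y => (ψ i y : ℂ)) with hU
  set V : Matrix G G ℂ := Matrix.of (fun y j => ((ψ j y⁻¹ : ℂˣ) : ℂ)) with hV
  set lam : G → ℂ := fun i => ∑ g, (ψ i g : ℂ) * f g with hlam
  have hUM : U * M = Matrix.diagonal lam * U := by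
    ext i y
    rw [Matrix.mul_apply, Matrix.diagonal_mul]
    calc ∑ x, U i x * M x y = ∑ g, U i (g * y) * M (g * y) y :=
          (Fintype.sum_equiv (Equiv.mulRight y) _ _ (fun g => rfl)).symm
      _ = ∑ g, ((ψ i g : ℂ) * f g) * (ψ i y : ℂ) := by
          refine Finset.sum_congr rfl fun g _ => ?_
          simp only [hU, hMdef, Matrix.of_apply, mul_inv_cancel_right]
          rw [map_mul, Units.val_mul]; ring
      _ = lam i * U i y := by rw [← Finset.sum_mul, hlam, hU]; rfl
  have horth : U * V = (Fintype.card G : ℂ) • (1 : Matrix G G ℂ) := by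
    ext i j
    rw [Matrix.mul_apply, Matrix.smul_apply, Matrix.one_apply]
    have hterm : ∀ y : G, U i y * V y j = (((ψ i * (ψ j)⁻¹) y : ℂˣ) : ℂ) := by
      intro y
      simp only [hU, hV, Matrix.of_apply, MonoidHom.mul_apply, MonoidHom.inv_apply,
        map_inv, Units.val_mul]
    rw [Finset.sum_congr rfl fun y _ => hterm y]
    by_cases hij : i = j
    · subst hij
      simp [Finset.sum_const]
    · have hne : ψ i * (ψ j)⁻¹ ≠ 1 := by
        intro hc
        apply hij
        exact e.symm.injective (mul_inv_eq_one.mp hc)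
      rw [sum_hom_eq_zero hne, if_neg hij, smul_zero]
  have hcard : (Fintype.card G : ℂ) ≠ 0 := Nat.cast_ne_zero.mpr Fintype.card_ne_zero
  have hdetU : U.det ≠ 0 := by
    intro h0
    have : (U * V).det = 0 := by rw [Matrix.det_mul, h0, zero_mul]
    rw [horth, Matrix.det_smul, Matrix.det_one, mul_one] at this
    exact pow_ne_zero _ hcard this
  have hdets : U.det * M.det = U.det * ∏ i, lam i := by
    rw [← Matrix.det_mul, hUM, Matrix.det_mul, Matrix.det_diagonal, mul_comm]
  have hMd : M.det = ∏ i, lam i := mul_left_cancel₀ hdetU hdets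
  rw [hMd, hlam]
  exact Equiv.prod_comp e.symm.toEquiv (fun ψ' => ∑ g, (ψ' g : ℂ) * f g)

lemma mem_zpowers_neg_one {N : ℕ} (g : (ZMod N)ˣ) :
    g ∈ Subgroup.zpowers (-1 : (ZMod N)ˣ) ↔ g = 1 ∨ g = -1 := by
  have h2 : (-1 : (ZMod N)ˣ) ^ (2 : ℤ) = 1 := by
    rw [zpow_two, neg_mul_neg, one_mul]
  constructor
  · intro hg
    obtain ⟨k, hk⟩ := Subgroup.mem_zpowers_iff.mp hg
    rcases Int.even_or_odd k with ⟨m, hm⟩ | ⟨m, hm⟩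
    · left
      rw [← hk, hm, show m + m = 2 * m by ring, zpow_mul, h2, one_zpow]
    · right
      rw [← hk, hm, zpow_add, zpow_mul, h2, one_zpow, one_mul, zpow_one]
  · rintro (rfl | rfl)
    · exact Subgroup.one_mem _
    · exact Subgroup.mem_zpowers _

lemma neg_one_ne_one_units {N : ℕ} (hN : 4 ≤ N) : (-1 : (ZMod N)ˣ) ≠ 1 := by
  haveI : Fact (2 < N) := ⟨by omega⟩
  intro hc
  apply ZMod.neg_one_ne_one (n := N)
  have := congrArg (Units.val) hc
  simpa using this

lemma fiber_sum {N : ℕ} [NeZero N] (hN : 4 ≤ N) (h : unitsModPM N → ℂ) :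
    ∑ a : (ZMod N)ˣ, h (QuotientGroup.mk a) = 2 * ∑ x : unitsModPM N, h x := by
  rw [Finset.sum_comp h (QuotientGroup.mk : (ZMod N)ˣ → unitsModPM N)]
  rw [Finset.image_univ_of_surjective (QuotientGroup.mk_surjective)]
  rw [Finset.mul_sum]
  refine Finset.sum_congr rfl fun x _ => ?_
  obtain ⟨r, rfl⟩ := QuotientGroup.mk_surjective x
  have hrne : r ≠ -r := by
    intro hc
    apply neg_one_ne_one_units hN
    have : (-1 : (ZMod N)ˣ) * r = 1 * r := by
      rw [neg_one_mul, one_mul, ← hc]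
    exact mul_right_cancel this
  have hfilt : (Finset.univ.filter
      (fun a : (ZMod N)ˣ => QuotientGroup.mk a = (QuotientGroup.mk r : unitsModPM N)))
      = {r, -r} := by
    ext a
    simp only [Finset.mem_filter, Finset.mem_univ, true_and, Finset.mem_insert,
      Finset.mem_singleton]
    rw [QuotientGroup.eq, mem_zpowers_neg_one]
    constructor
    · rintro (h1 | h1)
      · left; exact inv_mul_eq_one.mp h1
      · right
        have : r = a * (-1) := inv_mul_eq_iff_eq_mul.mp h1
        rw [this, mul_neg_one, neg_neg]
    · rintro (rfl | rfl)
      · left; exact inv_mul_cancel a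
      · right
        rw [inv_mul_eq_iff_eq_mul, mul_neg_one, neg_neg]
  rw [hfilt]
  rw [Finset.card_insert_of_notMem (by simpa using hrne), Finset.card_singleton]
  norm_num [two_smul]
  ring

lemma B2chi_eq_units_sum {N : ℕ} [NeZero N] (hN : 2 ≤ N) (χ : DirichletCharacter ℂ N) :
    B2chi χ = (N : ℂ) *
      ∑ u : (ZMod N)ˣ, χ (u : ZMod N) * ((B₂ ((((u : ZMod N)).val : ℝ) / N) : ℝ) : ℂ) := by
  have hN0 : (N : ℝ) ≠ 0 := Nat.cast_ne_zero.mpr (NeZero.ne N)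
  rw [B2chi]
  congr 1
  have step1 : ∑ a ∈ Finset.Icc 1 N, χ (a : ZMod N) * ((B₂ ((a : ℝ) / N) : ℝ) : ℂ)
      = ∑ b : ZMod N, χ b * ((B₂ (((b.val : ℝ)) / N) : ℝ) : ℂ) := by
    refine Finset.sum_nbij' (fun a => (a : ZMod N))
      (fun b => if b = 0 then N else b.val) (fun a _ => Finset.mem_univ _) ?_ ?_ ?_ ?_
    · intro b _
      try dsimp only
      by_cases hb : b = 0
      · rw [if_pos hb, Finset.mem_Icc]
        omega
      · simp only [if_neg hb, Finset.mem_Icc]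
        have h1 : b.val ≠ 0 := fun hc => hb ((ZMod.val_eq_zero b).mp hc)
        have h2 : b.val < N := ZMod.val_lt b
        omega
    · intro a ha
      try dsimp only
      rw [Finset.mem_Icc] at ha
      by_cases haN : a = N
      · subst haN
        simp [ZMod.natCast_self]
      · have hlt : a < N := by omega
        have hne : (a : ZMod N) ≠ 0 := by
          rw [Ne, ZMod.natCast_eq_zero_iff]
          intro hdvd
          exact absurd (Nat.le_of_dvd (by omega) hdvd) (by omega)
        rw [if_neg hne, ZMod.val_cast_of_lt hlt]
    · intro b _
      try dsimp only
      by_cases hb : b = 0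
      · simp [hb, ZMod.natCast_self]
      · rw [if_neg hb, ZMod.natCast_val, ZMod.cast_id]
    · intro a ha
      try dsimp only
      rw [Finset.mem_Icc] at ha
      congr 2
      by_cases haN : a = N
      · subst haN
        rw [ZMod.natCast_self, ZMod.val_zero, div_self hN0]
        simp [B₂, Int.fract_one, Int.fract_zero]
      · rw [ZMod.val_cast_of_lt (by omega)]
  rw [step1]
  have step2 : ∑ b : ZMod N, χ b * ((B₂ (((b.val : ℝ)) / N) : ℝ) : ℂ)
      = ∑ b ∈ Finset.univ.image (fun u : (ZMod N)ˣ => (u : ZMod N)),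
          χ b * ((B₂ (((b.val : ℝ)) / N) : ℝ) : ℂ) := by
    refine (Finset.sum_subset (Finset.subset_univ _) fun b _ hb => ?_).symm
    have : ¬IsUnit b := by
      intro hu
      exact hb (Finset.mem_image.mpr ⟨hu.unit, Finset.mem_univ _, hu.unit_spec⟩)
    rw [MulChar.map_nonunit χ this, zero_mul]
  rw [step2, Finset.sum_image (fun u _ v _ h => Units.ext h)]

/-- **Determinant of the Bernoulli matrix.** Let `N ≥ 4`, `G = (ℤ/Nℤ)ˣ/±1`, and let
`f : G → ℝ` be the (well-defined) function `f([a]) = (N/2)·B₂({a/N})`. Then the `G × G`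
matrix `M` with `M(x,y) = f(x·y⁻¹)` has determinant `∏_χ (1/4)·B_{2,χ}`, the product being
over all even Dirichlet characters `χ` modulo `N`. -/
theorem det_bernoulli_matrix (N : ℕ) [NeZero N] (hN : 4 ≤ N)
    (f : unitsModPM N → ℝ)
    (hf : ∀ a : (ZMod N)ˣ,
      f (QuotientGroup.mk a) = ((N : ℝ) / 2) * B₂ (((a : ZMod N).val : ℝ) / N))
    (M : Matrix (unitsModPM N) (unitsModPM N) ℝ)
    (hM : ∀ x y : unitsModPM N, M x y = f (x * y⁻¹)) :
    (M.det : ℂ) =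
      ∏ χ ∈ Finset.univ.filter (fun χ : DirichletCharacter ℂ N => χ (-1) = 1),
        (1 / 4 : ℂ) * B2chi χ := by
  haveI : NeZero (Monoid.exponent (unitsModPM N)) := by
    constructor
    exact Monoid.exponent_ne_zero_of_finite (G := unitsModPM N)
  haveI : Finite (unitsModPM N →* ℂˣ) :=
    (CommGroup.monoidHom_mulEquiv_of_hasEnoughRootsOfUnity (unitsModPM N) ℂ).elim
      fun e => Finite.of_equiv _ e.symm.toEquiv
  haveI : Fintype (unitsModPM N →* ℂˣ) := Fintype.ofFinite _
  have hmap : ((M.map (Complex.ofRealHom)).det : ℂ) = ((M.det : ℝ) : ℂ) :=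
    (RingHom.map_det Complex.ofRealHom M).symm
  have hMc : M.map Complex.ofRealHom
      = Matrix.of (fun x y : unitsModPM N => ((f (x * y⁻¹) : ℝ) : ℂ)) := by
    ext x y
    simp [Matrix.map_apply, hM]
  have hd : (Matrix.of (fun x y : unitsModPM N => ((f (x * y⁻¹) : ℝ) : ℂ))).det
      = ∏ ψ : unitsModPM N →* ℂˣ, ∑ g : unitsModPM N, (ψ g : ℂ) * ((f g : ℝ) : ℂ) :=
    dedekind_det (fun g => ((f g : ℝ) : ℂ))
  rw [← hmap, hMc]
  refine Eq.trans (by exact hd) ?_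
  have hcoe : ((-1 : (ZMod N)ˣ) : ZMod N) = (-1 : ZMod N) := by simp
  have hmkneg : (QuotientGroup.mk (-1 : (ZMod N)ˣ) : unitsModPM N) = 1 :=
    (QuotientGroup.eq_one_iff _).mpr (Subgroup.mem_zpowers _)
  refine Finset.prod_bij'
    (fun (ψ : unitsModPM N →* ℂˣ) _ =>
      (MulChar.ofUnitHom (ψ.comp (QuotientGroup.mk' _)) : DirichletCharacter ℂ N))
    (fun χ hχ => QuotientGroup.lift _ (MulChar.toUnitHom χ) (by
      rw [Subgroup.zpowers_le, MonoidHom.mem_ker]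
      apply Units.ext
      rw [MulChar.coe_toUnitHom, hcoe, (Finset.mem_filter.mp hχ).2, Units.val_one]))
    ?_ (fun χ hχ => Finset.mem_univ _) ?_ ?_ ?_
  · intro ψ _
    rw [Finset.mem_filter]
    refine ⟨Finset.mem_univ _, ?_⟩
    rw [← hcoe, MulChar.ofUnitHom_coe]
    show ((ψ (QuotientGroup.mk (-1 : (ZMod N)ˣ)) : ℂˣ) : ℂ) = 1
    rw [hmkneg, map_one, Units.val_one]
  · intro ψ _
    refine MonoidHom.ext fun x => ?_
    refine QuotientGroup.induction_on x fun a => ?_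
    try dsimp only
    rw [QuotientGroup.lift_mk]
    rw [MulChar.toUnitHom_eq, MulChar.ofUnitHom_eq, Equiv.apply_symm_apply]
    rfl
  · intro χ hχ
    apply MulChar.equivToUnitHom.injective
    ext a
    try dsimp only
    rw [MulChar.ofUnitHom_eq, Equiv.apply_symm_apply, MonoidHom.comp_apply,
      QuotientGroup.mk'_apply, QuotientGroup.lift_mk]
    rfl
  · intro ψ _
    try dsimp only
    have hχa : ∀ a : (ZMod N)ˣ,
        (MulChar.ofUnitHom (ψ.comp (QuotientGroup.mk' _)) : DirichletCharacter ℂ N) (a : ZMod N)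
          = ((ψ (QuotientGroup.mk a) : ℂˣ) : ℂ) := fun a => by
      rw [MulChar.ofUnitHom_coe]
      rfl
    have hfib := fiber_sum hN (fun g => (ψ g : ℂ) * ((f g : ℝ) : ℂ))
    have hA : ∑ a : (ZMod N)ˣ,
          (ψ (QuotientGroup.mk a) : ℂ) * ((f (QuotientGroup.mk a) : ℝ) : ℂ)
        = (N : ℂ) / 2 * ∑ a : (ZMod N)ˣ,
            (MulChar.ofUnitHom (ψ.comp (QuotientGroup.mk' _)) : DirichletCharacter ℂ N)
              ((a : ZMod N))
            * ((B₂ ((((a : ZMod N)).val : ℝ) / N) : ℝ) : ℂ) := by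
      rw [Finset.mul_sum]
      refine Finset.sum_congr rfl fun a _ => ?_
      rw [hχa, hf a]
      push_cast
      ring
    rw [B2chi_eq_units_sum (by omega)]
    rw [hA] at hfib
    linear_combination (-1/2 : ℂ) * hfib
end

section
/- Let M be a positive integer with at least two distinct prime divisors, let p_1,…,p_j be distinct primes such that p_i² | M for each i, and let g be an integer coprime to M. Then the map (m_1,…,m_j) ↦ [g + m_1·M/p_1 + ⋯ + m_j·M/p_j] ∈ (ℤ/Mℤ)/±1, defined for integer tuples with 0 ≤ m_i ≤ p_i − 1, is injective, and its image is exactly the orbit O_{g, p_1⋯p_j} = {h ∈ ℤ/Mℤ : h ≡ ±g (mod M/(p_1⋯p_j))}/±1. -/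
open scoped Classical

/-- The setoid on `ℤ/Mℤ` identifying `x` with `−x`. -/
def negSetoid (M : ℕ) : Setoid (ZMod M) where
  r x y := x = y ∨ x = -y
  iseqv := by
    constructor
    · intro x; exact Or.inl rfl
    · rintro x y (rfl | rfl)
      · exact Or.inl rfl
      · exact Or.inr (neg_neg _).symm
    · rintro x y z (rfl | rfl) (rfl | rfl)
      · exact Or.inl rfl
      · exact Or.inr rfl
      · exact Or.inr rfl
      · exact Or.inl (neg_neg _)

/-- The quotient `(ℤ/Mℤ)/±1` of `ℤ/Mℤ` by the involution `x ↦ −x`. -/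
abbrev ZModPM (M : ℕ) : Type := Quotient (negSetoid M)

/-- The class `[x] ∈ (ℤ/Mℤ)/±1` of `x ∈ ℤ/Mℤ`. -/
def mkPM (M : ℕ) (x : ZMod M) : ZModPM M := Quotient.mk (negSetoid M) x

/-- For `a ∈ ℤ/Mℤ` and a divisor `K` of `M`, the orbit `O_{a,K}`: the image in
`(ℤ/Mℤ)/±1` of the set `{a + k·M/K : k = 0, 1, …, K−1}`. -/
noncomputable def orbitPM (M : ℕ) (a : ZMod M) (K : ℕ) : Finset (ZModPM M) :=
  (Finset.range K).image (fun k => mkPM M (a + (k : ZMod M) * ((M / K : ℕ) : ZMod M)))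

open Finset in
lemma aux_inj (j : ℕ) (p : Fin j → ℕ) (hp : ∀ i, (p i).Prime) (hpinj : Function.Injective p)
    (c : Fin j → ℤ) (hc : ∀ i, |c i| < p i)
    (h : (∏ i, (p i : ℤ)) ∣ ∑ i, c i * ∏ i' ∈ univ.erase i, (p i' : ℤ)) :
    ∀ i, c i = 0 := by
  intro l
  have hPl : ((p l : ℤ)) ∣ ∑ i, c i * ∏ i' ∈ univ.erase i, (p i' : ℤ) :=
    dvd_trans (Finset.dvd_prod_of_mem (fun i => (p i : ℤ)) (mem_univ l)) h
  have hterm : ∀ i ∈ univ.erase l, (p l : ℤ) ∣ c i * ∏ i' ∈ univ.erase i, (p i' : ℤ) := by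
    intro i hi
    have hli : l ∈ univ.erase i := by
      simp only [Finset.mem_erase, Finset.mem_univ, and_true] at hi ⊢
      exact fun e => hi e.symm
    exact Dvd.dvd.mul_left (Finset.dvd_prod_of_mem (fun i => (p i : ℤ)) hli) _
  have hdecomp : ∑ i, c i * ∏ i' ∈ univ.erase i, (p i' : ℤ)
      = c l * (∏ i' ∈ univ.erase l, (p i' : ℤ))
        + ∑ i ∈ univ.erase l, c i * ∏ i' ∈ univ.erase i, (p i' : ℤ) :=
    (Finset.add_sum_erase _ _ (mem_univ l)).symm
  rw [hdecomp] at hPl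
  have h2 : (p l : ℤ) ∣ c l * ∏ i' ∈ univ.erase l, (p i' : ℤ) := by
    have hs := Finset.dvd_sum hterm
    have := dvd_sub hPl hs
    simpa using this
  have hprime : Prime ((p l : ℤ)) := Nat.prime_iff_prime_int.mp (hp l)
  rcases hprime.dvd_mul.mp h2 with hcl | hPl'
  · exact Int.eq_zero_of_abs_lt_dvd hcl (hc l)
  · exfalso
    obtain ⟨i, hi, hdvd⟩ := (Prime.dvd_finset_prod_iff hprime _).mp hPl'
    have : p l = p i := ((Nat.prime_dvd_prime_iff_eq (hp l) (hp i)).mp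
      (Int.natCast_dvd_natCast.mp hdvd))
    have := hpinj this
    simp [this] at hi

lemma orbitPM_eq (M : ℕ) (a : ZMod M) (K : ℕ) :
    orbitPM M a K = (Finset.range K).image
      (fun k : ℕ => mkPM M (a + (k : ZMod M) * ((M / K : ℕ) : ZMod M))) := by
  unfold orbitPM
  ext x
  simp only [Finset.mem_image, Finset.bind_def, Finset.sup_eq_biUnion, Finset.mem_biUnion,
    Finset.pure_def, Finset.mem_singleton, Finset.mem_range]
  constructor
  · rintro ⟨y, ⟨k, hk, rfl⟩, rfl⟩
    exact ⟨k, hk, rfl⟩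
  · rintro ⟨k, hk, rfl⟩
    exact ⟨(k : ZMod M), ⟨k, hk, rfl⟩, rfl⟩

lemma mem_orbitPM {M : ℕ} {a : ZMod M} {K : ℕ} {x : ZModPM M} (k : ℕ) (hk : k < K)
    (hx : x = mkPM M (a + (k : ZMod M) * ((M / K : ℕ) : ZMod M))) : x ∈ orbitPM M a K := by
  rw [orbitPM_eq]
  exact Finset.mem_image.mpr ⟨k, Finset.mem_range.mpr hk, hx.symm⟩

lemma card_orbitPM_le (M : ℕ) (a : ZMod M) (K : ℕ) : (orbitPM M a K).card ≤ K := by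
  rw [orbitPM_eq]
  exact le_trans Finset.card_image_le (by simp)

/-- **Parametrization of orbits (Lemma 4.6).** Let `M` have at least two distinct prime
divisors, let `p₁, …, p_j` be distinct primes with `p_i² | M`, and let `g` be coprime to
`M`. Then the map `(m₁,…,m_j) ↦ [g + m₁·M/p₁ + ⋯ + m_j·M/p_j]`, `0 ≤ m_i ≤ p_i − 1`, is
injective with image exactly the orbit `O_{g, p₁⋯p_j}`. -/
theorem orbit_parametrization (M : ℕ) (hM : 2 ≤ M.primeFactors.card)
    (j : ℕ) (p : Fin j → ℕ) (hp : ∀ i, (p i).Prime) (hpinj : Function.Injective p)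
    (hsq : ∀ i, p i ^ 2 ∣ M) (g : ℤ) (hg : Int.gcd g M = 1) :
    Function.Injective
        (fun m : (∀ i : Fin j, Fin (p i)) =>
          mkPM M ((g : ZMod M) + ∑ i, ((m i : ℕ) : ZMod M) * ((M / p i : ℕ) : ZMod M))) ∧
      Set.range
          (fun m : (∀ i : Fin j, Fin (p i)) =>
            mkPM M ((g : ZMod M) + ∑ i, ((m i : ℕ) : ZMod M) * ((M / p i : ℕ) : ZMod M))) =
        ↑(orbitPM M (g : ZMod M) (∏ i, p i)) := by
  classical
  set K : ℕ := ∏ i, p i with hKdef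
  have hKpos : 0 < K := Finset.prod_pos fun i _ => (hp i).pos
  have hM6 : 6 ≤ M := by
    obtain ⟨q, hq, r, hr, hqr⟩ := Finset.one_lt_card.mp hM
    rw [Nat.mem_primeFactors] at hq hr
    obtain ⟨hqp, hqd, hM0⟩ := hq
    obtain ⟨hrp, hrd, -⟩ := hr
    have hqrd : q * r ∣ M := Nat.Coprime.mul_dvd_of_dvd_of_dvd
      ((Nat.coprime_primes hqp hrp).mpr hqr) hqd hrd
    have h6 : 6 ≤ q * r := by
      have h2q := hqp.two_le
      have h2r := hrp.two_le
      rcases eq_or_ne q 2 with rfl | hq2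
      · have : 3 ≤ r := by omega
        omega
      · have hq3 : 3 ≤ q := by omega
        rcases eq_or_ne r 2 with rfl | hr2
        · omega
        · have hr3 : 3 ≤ r := by omega
          nlinarith
    exact le_trans h6 (Nat.le_of_dvd (by omega) hqrd)
  have hMpos : 0 < M := by omega
  have hK2 : K ^ 2 ∣ M := by
    have hcop : Pairwise (Function.onFun IsCoprime fun i => ((p i : ℤ)) ^ 2) := by
      intro i i' hne
      exact (Int.isCoprime_iff_gcd_eq_one.mpr (by
        simpa [Int.gcd_natCast_natCast] using
          (Nat.coprime_primes (hp i) (hp i')).mpr fun e => hne (hpinj e))).pow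
    have := Fintype.prod_dvd_of_coprime (z := (M : ℤ)) hcop (fun i => by
      exact_mod_cast hsq i)
    have h2 : ((K : ℤ)) ^ 2 ∣ (M : ℤ) := by
      rw [hKdef]
      push_cast
      rw [← Finset.prod_pow]
      exact this
    exact_mod_cast h2
  have hKM : K ∣ M := dvd_trans (dvd_pow_self K two_ne_zero) hK2
  have hMK : M / K * K = M := Nat.div_mul_cancel hKM
  have hKMK : K ∣ M / K := (Nat.dvd_div_iff_mul_dvd hKM).mpr (by rw [← pow_two]; exact hK2)
  have hMKpos : 0 < M / K := Nat.div_pos (Nat.le_of_dvd hMpos hKM) hKpos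
  have hpl : ∀ l, p l ∣ K := fun l => Finset.dvd_prod_of_mem p (Finset.mem_univ l)
  have hKp : ∀ l, K / p l = ∏ i ∈ Finset.univ.erase l, p i := by
    intro l
    have := Finset.mul_prod_erase Finset.univ p (Finset.mem_univ l)
    rw [hKdef, ← this, Nat.mul_div_cancel_left _ (hp l).pos]
  have hMp : ∀ l, M / p l = (M / K) * (K / p l) := by
    intro l
    conv_rhs => rw [← Nat.mul_div_assoc _ (hpl l), hMK]
  -- integer-valued sum
  set S : (∀ i : Fin j, Fin (p i)) → ℤ :=
    fun m => ∑ i, ((m i : ℕ) : ℤ) * ((M / p i : ℕ) : ℤ) with hSdef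
  have hval : ∀ m : (∀ i : Fin j, Fin (p i)),
      (g : ZMod M) + ∑ i, ((m i : ℕ) : ZMod M) * ((M / p i : ℕ) : ZMod M)
        = (((g + S m : ℤ)) : ZMod M) := by
    intro m
    rw [hSdef]
    simp only [Int.cast_add, Int.cast_sum, Int.cast_mul, Int.cast_natCast]
  have hmk : ∀ x y : ZMod M, mkPM M x = mkPM M y ↔ (x = y ∨ x = -y) := by
    intro x y
    exact ⟨fun h => Quotient.exact h, fun h => Quotient.sound h⟩
  -- rewrite of sums
  have hSfac : ∀ (c : Fin j → ℤ),
      (∑ i, c i * ((M / p i : ℕ) : ℤ))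
        = ((M / K : ℕ) : ℤ) * ∑ i, c i * ((K / p i : ℕ) : ℤ) := by
    intro c
    rw [Finset.mul_sum]
    refine Finset.sum_congr rfl fun i _ => ?_
    rw [hMp i]
    push_cast
    ring
  have hKcast : ((K : ℕ) : ℤ) = ∏ i, (p i : ℤ) := by rw [hKdef]; push_cast; ring
  have hKpcast : ∀ l, ((K / p l : ℕ) : ℤ) = ∏ i ∈ Finset.univ.erase l, (p i : ℤ) := by
    intro l
    rw [hKp l]
    push_cast
    ring
  have hMcast : (M : ℤ) = ((M / K : ℕ) : ℤ) * ((K : ℕ) : ℤ) := by exact_mod_cast hMK.symm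
  have hMK0 : ((M / K : ℕ) : ℤ) ≠ 0 := by exact_mod_cast hMKpos.ne'
  -- injectivity
  have hinj : Function.Injective
      (fun m : (∀ i : Fin j, Fin (p i)) =>
        mkPM M ((g : ZMod M) + ∑ i, ((m i : ℕ) : ZMod M) * ((M / p i : ℕ) : ZMod M))) := by
    intro m n hmn
    simp only [hval] at hmn
    rw [hmk] at hmn
    rcases hmn with h | h
    · -- plus case
      have hdvd : (M : ℤ) ∣ (g + S n) - (g + S m) :=
        Int.ModEq.dvd ((ZMod.intCast_eq_intCast_iff _ _ _).mp h)
      have hdiff0 : S n - S m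
          = ∑ i, (((n i : ℕ) : ℤ) - ((m i : ℕ) : ℤ)) * ((M / p i : ℕ) : ℤ) := by
        simp only [hSdef, ← Finset.sum_sub_distrib, sub_mul]
      have hdiff : (g + S n) - (g + S m)
          = ∑ i, (((n i : ℕ) : ℤ) - ((m i : ℕ) : ℤ)) * ((M / p i : ℕ) : ℤ) := by
        rw [← hdiff0]; ring
      rw [hdiff, hSfac, hMcast] at hdvd
      have hdvd2 : ((K : ℕ) : ℤ) ∣ ∑ i, (((n i : ℕ) : ℤ) - ((m i : ℕ) : ℤ)) * ((K / p i : ℕ) : ℤ) :=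
        (mul_dvd_mul_iff_left hMK0).mp hdvd
      rw [hKcast] at hdvd2
      have hdvd3 : (∏ i, (p i : ℤ)) ∣
          ∑ i, (((n i : ℕ) : ℤ) - ((m i : ℕ) : ℤ)) * ∏ i' ∈ Finset.univ.erase i, (p i' : ℤ) := by
        have : ∀ i : Fin j, (((n i : ℕ) : ℤ) - ((m i : ℕ) : ℤ)) * ((K / p i : ℕ) : ℤ)
            = (((n i : ℕ) : ℤ) - ((m i : ℕ) : ℤ)) * ∏ i' ∈ Finset.univ.erase i, (p i' : ℤ) :=
          fun i => by rw [hKpcast i]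
        rwa [Finset.sum_congr rfl fun i _ => this i] at hdvd2
      have hzero := aux_inj j p hp hpinj _
        (fun i => by
          have h1 := (m i).isLt
          have h2 := (n i).isLt
          rw [abs_lt]
          constructor <;> [skip; skip] <;> omega) hdvd3
      funext i
      have := hzero i
      have h1 := (m i).isLt
      exact Fin.ext (by omega)
    · -- minus case: contradiction
      exfalso
      have h' : (((g + S m : ℤ)) : ZMod M) = (((-(g + S n) : ℤ)) : ZMod M) := by
        rw [h]; push_cast; ring
      have hdvd : (M : ℤ) ∣ (-(g + S n)) - (g + S m) :=
        Int.ModEq.dvd ((ZMod.intCast_eq_intCast_iff _ _ _).mp h')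
      have hdvd' : (M : ℤ) ∣ 2 * g + (S m + S n) := by
        have := dvd_neg.mpr hdvd
        have e : -((-(g + S n)) - (g + S m)) = 2 * g + (S m + S n) := by ring
        rwa [e] at this
      have hSsum0 : S m + S n
          = ∑ i, (((m i : ℕ) : ℤ) + ((n i : ℕ) : ℤ)) * ((M / p i : ℕ) : ℤ) := by
        simp only [hSdef, ← Finset.sum_add_distrib, add_mul]
      have hSsum : S m + S n = ((M / K : ℕ) : ℤ)
          * ∑ i, (((m i : ℕ) : ℤ) + ((n i : ℕ) : ℤ)) * ((K / p i : ℕ) : ℤ) := by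
        rw [hSsum0, hSfac]
      have hdvd2 : ((M / K : ℕ) : ℤ) ∣ 2 * g := by
        have hA : ((M / K : ℕ) : ℤ) ∣ 2 * g + (S m + S n) :=
          dvd_trans ⟨((K : ℕ) : ℤ), hMcast⟩ hdvd'
        have hB : ((M / K : ℕ) : ℤ) ∣ (S m + S n) := ⟨_, hSsum⟩
        have := dvd_sub hA hB
        simpa using this
      have hdvdN : M / K ∣ 2 * g.natAbs := by
        have h3 : M / K ∣ (2 * g).natAbs := by
          rwa [Int.natCast_dvd] at hdvd2
        simpa [Int.natAbs_mul] using h3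
      have hcop : Nat.Coprime (M / K) g.natAbs :=
        (Nat.Coprime.coprime_dvd_right (Nat.div_dvd_of_dvd hKM)
          (by rw [Int.gcd] at hg; exact hg)).symm
      have h2 : M / K ∣ 2 := (Nat.Coprime.dvd_of_dvd_mul_right hcop hdvdN)
      have hle : M / K ≤ 2 := Nat.le_of_dvd (by norm_num) h2
      have hKle : K ≤ M / K := Nat.le_of_dvd hMKpos hKMK
      nlinarith [hMK]
  refine ⟨hinj, ?_⟩
  -- image
  have him : Finset.univ.image
      (fun m : (∀ i : Fin j, Fin (p i)) =>
        mkPM M ((g : ZMod M) + ∑ i, ((m i : ℕ) : ZMod M) * ((M / p i : ℕ) : ZMod M)))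
      = orbitPM M (g : ZMod M) K := by
    apply Finset.eq_of_subset_of_card_le
    · intro x hx
      obtain ⟨m, -, rfl⟩ := Finset.mem_image.mp hx
      set t : ℕ := ∑ i, (m i : ℕ) * (K / p i) with htdef
      refine mem_orbitPM (t % K) (Nat.mod_lt _ hKpos) ?_
      have hnat : (∑ i, (m i : ℕ) * (M / p i)) = t % K * (M / K) + M * (t / K) := by
        have h1 : (∑ i, (m i : ℕ) * (M / p i)) = (M / K) * t := by
          rw [htdef, Finset.mul_sum]
          refine Finset.sum_congr rfl fun i _ => ?_
          rw [hMp i]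
          ring
        have h2 : (M / K) * t = t % K * (M / K) + M * (t / K) := by
          calc M / K * t = M / K * (t % K + K * (t / K)) := by rw [Nat.mod_add_div]
            _ = t % K * (M / K) + (M / K * K) * (t / K) := by ring
            _ = t % K * (M / K) + M * (t / K) := by rw [hMK]
        rw [h1, h2]
      congr 1
      have hZ : (∑ i, ((m i : ℕ) : ZMod M) * ((M / p i : ℕ) : ZMod M))
          = (((∑ i, (m i : ℕ) * (M / p i) : ℕ)) : ZMod M) := by push_cast; ring
      rw [hZ, hnat]
      simp only [Nat.cast_add, Nat.cast_mul, ZMod.natCast_self, zero_mul, add_zero]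
    · have hcard : (Finset.univ.image
          (fun m : (∀ i : Fin j, Fin (p i)) =>
            mkPM M ((g : ZMod M) + ∑ i, ((m i : ℕ) : ZMod M) * ((M / p i : ℕ) : ZMod M)))).card
          = K := by
        rw [Finset.card_image_of_injective _ hinj, Finset.card_univ, Fintype.card_pi]
        simp [hKdef]
      rw [hcard]
      exact card_orbitPM_le M _ K
  rw [← him, Finset.coe_image, Finset.coe_univ, Set.image_univ]
end
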